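/- arXiv:1610.06983 — 3 statements merged into one kernel-verified Lean document; each statement's English description precedes it below -/
import Mathlib

section
/- Let A, D be points on a circle centered at O, M a point with M ≠ O, and X the intersection of line AD with a line through M perpendicular to OM. Then |DM² − AM²| = 2·AD·OM·sin(∠AXM), where ∠AXM is the angle at X in triangle AXM (assume A ≠ X). -/
open EuclideanGeometry

local notation "⟪" x ", " y "⟫" => @inner ℝ _ _ x y

private lemma key (u v n : EuclideanSpace ℝ (Fin 2)) (hv : v ≠ 0)
    (hn : ⟪v, n⟫ = (0:ℝ)) :
    ⟪u,n⟫^2 * ⟪v,v⟫ = ⟪n,n⟫ * (⟪u,u⟫*⟪v,v⟫ - ⟪u,v⟫*⟪u,v⟫) := by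
  have hvv : (⟪v,v⟫:ℝ) ≠ 0 := inner_self_ne_zero.mpr hv
  apply mul_right_cancel₀ hvv
  simp only [PiLp.inner_apply, RCLike.inner_apply, conj_trivial, Fin.sum_univ_two] at hn ⊢
  set u0 := u 0; set u1 := u 1; set v0 := v 0; set v1 := v 1; set n0 := n 0; set n1 := n 1
  linear_combination ((u0*v0+u1*v1)^2*(v0*n0+v1*n1) + 2*(u0*v0+u1*v1)*(u0*v1-u1*v0)*(n0*v1-n1*v0) - (u0*v1-u1*v0)^2*(v0*n0+v1*n1)) * hn

/-- Let `A`, `D` be points on a circle centered at `O`, `M` a point with `M ≠ O`, and `X`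
the intersection of line `AD` with a line through `M` perpendicular to `OM`. Then
`|DM² − AM²| = 2 · AD · OM · sin(∠AXM)`. -/
theorem stmt2 (O A D M X : EuclideanSpace ℝ (Fin 2))
    (hAD : dist O A = dist O D) (hADne : A ≠ D) (hMO : M ≠ O)
    (hX : X ∈ affineSpan ℝ ({A, D} : Set (EuclideanSpace ℝ (Fin 2))))
    (hXA : X ≠ A) (hXM : X ≠ M)
    (hperp : inner ℝ (X - M) (O - M) = (0 : ℝ)) :
    |dist D M ^ 2 - dist A M ^ 2| =
      2 * dist A D * dist O M * Real.sin (∠ A X M) := by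
  set u := A - X with hu
  set v := M - X with hv
  set n := O - M with hn
  set d := D - A with hd
  -- X on line AD: get t with X - A = t • d
  rw [show X = (X -ᵥ A) +ᵥ A from (vsub_vadd X A).symm, vadd_left_mem_affineSpan_pair] at hX
  obtain ⟨t, ht⟩ := hX
  have htne : t ≠ 0 := by
    rintro rfl
    apply hXA
    have : X -ᵥ A = (0 : EuclideanSpace ℝ (Fin 2)) := by rw [← ht]; simp
    rwa [vsub_eq_zero_iff_eq] at this
  have hud : u = (-t) • d := by
    rw [hu, hd]
    have : X - A = t • (D - A) := by
      have := ht.symm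
      simpa [vsub_eq_sub] using this
    have h2 : A - X = -(X - A) := by abel
    rw [h2, this]; module
  have hvne : v ≠ 0 := by
    intro h; rw [hv, sub_eq_zero] at h; exact hXM h.symm
  have hnne : n ≠ 0 := by
    intro h; rw [hn, sub_eq_zero] at h; exact hMO h.symm
  have hvn : ⟪v, n⟫ = (0:ℝ) := by
    have : X - M = -v := by rw [hv]; abel
    rw [this, inner_neg_left, neg_eq_zero] at hperp
    exact hperp
  -- Step A
  have hO : ⟪O-A, O-A⟫ = (⟪O-D, O-D⟫ : ℝ) := by
    rw [real_inner_self_eq_norm_sq, real_inner_self_eq_norm_sq, ← dist_eq_norm, ← dist_eq_norm, hAD]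
  have stepA : dist D M ^ 2 - dist A M ^ 2 = 2 * ⟪d, n⟫ := by
    rw [dist_eq_norm, dist_eq_norm, ← real_inner_self_eq_norm_sq, ← real_inner_self_eq_norm_sq, hd, hn]
    simp only [inner_sub_left, inner_sub_right] at hO ⊢
    linarith [real_inner_comm A D, real_inner_comm A M, real_inner_comm D M,
      real_inner_comm A O, real_inner_comm D O, real_inner_comm O M]
  -- angle
  have hang : ∠ A X M = InnerProductGeometry.angle u v := by
    rw [EuclideanGeometry.angle, hu, hv]
    congr 1 <;> exact vsub_eq_sub _ _
  -- key consequence: |⟪u,n⟫| = ‖n‖ * (sin (angle u v) * ‖u‖)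
  have hkey := key u v n hvne hvn
  have hsin := InnerProductGeometry.sin_angle_mul_norm_mul_norm u v
  have habs : |⟪u,n⟫| * ‖v‖ = ‖n‖ * (Real.sin (InnerProductGeometry.angle u v) * (‖u‖ * ‖v‖)) := by
    rw [hsin]
    have h1 : |⟪u,n⟫| * ‖v‖ = Real.sqrt (⟪u,n⟫^2 * ⟪v,v⟫) := by
      rw [real_inner_self_eq_norm_sq, Real.sqrt_mul (sq_nonneg _), Real.sqrt_sq_eq_abs,
        Real.sqrt_sq (norm_nonneg _)]
    have h2 : ‖n‖ * Real.sqrt (⟪u,u⟫*⟪v,v⟫ - ⟪u,v⟫*⟪u,v⟫)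
        = Real.sqrt (⟪n,n⟫ * (⟪u,u⟫*⟪v,v⟫ - ⟪u,v⟫*⟪u,v⟫)) := by
      rw [real_inner_self_eq_norm_sq n, Real.sqrt_mul (sq_nonneg _), Real.sqrt_sq (norm_nonneg _)]
    rw [h1, hkey, ← h2]
  have hvpos : (0:ℝ) < ‖v‖ := norm_pos_iff.mpr hvne
  have habs2 : |⟪u,n⟫| = ‖n‖ * (Real.sin (InnerProductGeometry.angle u v) * ‖u‖) :=
    mul_right_cancel₀ (ne_of_gt hvpos) (by rw [habs]; ring)
  -- finish
  have hun : ⟪u,n⟫ = (-t) * ⟪d,n⟫ := by rw [hud, real_inner_smul_left]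
  have hnormu : ‖u‖ = |t| * ‖d‖ := by rw [hud, norm_smul]; simp
  have hdistAD : dist A D = ‖d‖ := by rw [dist_eq_norm, hd, norm_sub_rev]
  have hdistOM : dist O M = ‖n‖ := by rw [dist_eq_norm, hn]
  rw [stepA, hang, hdistAD, hdistOM]
  have : |2 * ⟪d,n⟫| = 2 * |⟪d,n⟫| := by rw [abs_mul]; norm_num
  rw [this]
  have htabs : (0:ℝ) < |t| := abs_pos.mpr htne
  have : |t| * |⟪d,n⟫| = |t| * (‖d‖ * ‖n‖ * Real.sin (InnerProductGeometry.angle u v)) := by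
    have := habs2
    rw [hun, hnormu] at this
    rw [abs_mul, abs_neg] at this
    calc |t| * |⟪d,n⟫| = ‖n‖ * (Real.sin (InnerProductGeometry.angle u v) * (|t| * ‖d‖)) := this
    _ = |t| * (‖d‖ * ‖n‖ * Real.sin (InnerProductGeometry.angle u v)) := by ring
  have hfin := mul_left_cancel₀ (ne_of_gt htabs) this
  rw [hfin]; ring
end

section
/- Butterfly theorem: Let M be the midpoint of a chord PQ of a circle, and let AB and CD be two other chords through M, with A, C on one side of line PQ and B, D on the other side. Let X be the intersection of line AD with line PQ, and Y the intersection of line BC with line PQ. Then M is the midpoint of segment XY, i.e., dist(X,M) = dist(Y,M). -/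
open EuclideanGeometry

set_option maxHeartbeats 1000000 in
open RealInnerProductSpace in
/-- Butterfly theorem: `M` is the midpoint of chord `PQ`; chords `AB` and `CD` pass
through `M`, with `A, C` strictly on one side of line `PQ` and `B, D` strictly on the
other (sides of line `PQ` are measured by the sign of the inner product with `O − M`,
which is normal to `PQ`). If `X` is the intersection of line `AD` with line `PQ` and
`Y` the intersection of line `BC` with line `PQ`, then `dist X M = dist Y M`. -/
theorem stmt5 (O P Q A B C D M X Y : EuclideanSpace ℝ (Fin 2)) (r : ℝ) (hr : 0 < r)
    (hP : dist O P = r) (hQ : dist O Q = r)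
    (hA : dist O A = r) (hB : dist O B = r) (hC : dist O C = r) (hD : dist O D = r)
    (hM : M = midpoint ℝ P Q) (hPQ : P ≠ Q) (hMO : M ≠ O)
    (hAB : Sbtw ℝ A M B) (hCD : Sbtw ℝ C M D)
    (hACsame : 0 < (inner ℝ (A - M) (O - M) : ℝ) * (inner ℝ (C - M) (O - M) : ℝ))
    (hABopp : (inner ℝ (A - M) (O - M) : ℝ) * (inner ℝ (B - M) (O - M) : ℝ) < 0)
    (hCDopp : (inner ℝ (C - M) (O - M) : ℝ) * (inner ℝ (D - M) (O - M) : ℝ) < 0)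
    (hXAD : X ∈ affineSpan ℝ ({A, D} : Set (EuclideanSpace ℝ (Fin 2))))
    (hXPQ : X ∈ affineSpan ℝ ({P, Q} : Set (EuclideanSpace ℝ (Fin 2))))
    (hYBC : Y ∈ affineSpan ℝ ({B, C} : Set (EuclideanSpace ℝ (Fin 2))))
    (hYPQ : Y ∈ affineSpan ℝ ({P, Q} : Set (EuclideanSpace ℝ (Fin 2)))) :
    dist X M = dist Y M := by
  -- Extraction from affine span of a pair
  have spanPair : ∀ Z W R' : EuclideanSpace ℝ (Fin 2),
      R' ∈ affineSpan ℝ ({Z, W} : Set (EuclideanSpace ℝ (Fin 2))) →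
      ∃ t : ℝ, R' - M = (1 - t) • (Z - M) + t • (W - M) := by
    intro Z W R' hR
    have h' : (R' - Z) +ᵥ Z ∈ affineSpan ℝ ({Z, W} : Set (EuclideanSpace ℝ (Fin 2))) := by
      simpa using hR
    obtain ⟨t, ht⟩ := vadd_left_mem_affineSpan_pair.mp h'
    refine ⟨t, ?_⟩
    have ht' : t • (W - Z) = R' - Z := by simpa [vsub_eq_sub] using ht
    have hR' : R' = t • (W - Z) + Z := by rw [ht']; abel
    rw [hR']; module
  -- Extraction from strict betweenness
  have sbtwExtract : ∀ Z W : EuclideanSpace ℝ (Fin 2), Sbtw ℝ Z M W →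
      ∃ lam : ℝ, W - M = -(lam • (Z - M)) ∧ 0 < lam := by
    intro Z W h
    obtain ⟨t, ht, hteq⟩ := h.mem_image_Ioo
    rw [AffineMap.lineMap_apply] at hteq
    have hMZ : M = t • (W - Z) + Z := by rw [← hteq]; simp [vsub_eq_sub]
    have h0 : (0:ℝ) < t := ht.1
    have h1 : t < 1 := ht.2
    refine ⟨(1 - t)/t, ?_, div_pos (by linarith) h0⟩
    have hmul : ((1 - t)/t) * t = 1 - t := by field_simp
    rw [hMZ]
    calc W - (t • (W - Z) + Z) = (1 - t) • (W - Z) := by module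
      _ = (((1 - t)/t) * t) • (W - Z) := by rw [hmul]
      _ = -(((1 - t)/t) • (Z - (t • (W - Z) + Z))) := by rw [mul_smul]; module
  -- Circle equations
  have key : ∀ v w : EuclideanSpace ℝ (Fin 2),
      ⟪v - w, v - w⟫ = ⟪v, v⟫ - 2 * ⟪w, v⟫ + ⟪w, w⟫ := by
    intro v w
    rw [inner_sub_left, inner_sub_right, inner_sub_right, real_inner_comm v w]
    ring
  have circ : ∀ Z : EuclideanSpace ℝ (Fin 2), dist O Z = r →
      ⟪Z - M, Z - M⟫ - 2 * ⟪Z - M, O - M⟫ = r^2 - ⟪O - M, O - M⟫ := by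
    intro Z hZ
    have hn : ⟪O - Z, O - Z⟫ = r^2 := by
      rw [real_inner_self_eq_norm_sq, ← dist_eq_norm, hZ]
    have hOZ : O - Z = (O - M) - (Z - M) := by abel
    rw [hOZ, key (O - M) (Z - M)] at hn
    linarith
  have circA := circ A hA
  have circB := circ B hB
  have circC := circ C hC
  have circD := circ D hD
  have circP := circ P hP
  have circQ := circ Q hQ
  -- midpoint facts
  have hq : Q - M = -(P - M) := by
    rw [hM, ← vsub_eq_sub Q, ← vsub_eq_sub P, right_vsub_midpoint, left_vsub_midpoint,
      ← smul_neg]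
    simp [vsub_eq_sub, neg_sub]
  have hqq : ⟪Q - M, Q - M⟫ = ⟪P - M, P - M⟫ := by rw [hq, inner_neg_neg]
  have hqu : ⟪Q - M, O - M⟫ = -⟪P - M, O - M⟫ := by rw [hq, inner_neg_left]
  rw [hqq, hqu] at circQ
  have hpu : ⟪P - M, O - M⟫ = 0 := by linarith
  have hpp : ⟪P - M, P - M⟫ = r^2 - ⟪O - M, O - M⟫ := by linarith
  have hpne : P - M ≠ 0 := by
    intro h
    have hq0 : Q - M = 0 := by rw [hq, h, neg_zero]
    exact hPQ ((sub_eq_zero.mp h).trans (sub_eq_zero.mp hq0).symm)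
  have kpos : 0 < r^2 - ⟪O - M, O - M⟫ := by
    rw [← hpp]; rw [real_inner_self_eq_norm_sq]
    exact pow_pos (norm_pos_iff.mpr hpne) 2
  -- chords through M
  obtain ⟨lam, hblam, hlam0⟩ := sbtwExtract A B hAB
  obtain ⟨mu, hdmu, hmu0⟩ := sbtwExtract C D hCD
  have hbu : ⟪B - M, O - M⟫ = -(lam * ⟪A - M, O - M⟫) := by
    rw [hblam, inner_neg_left, real_inner_smul_left]
  have hbp : ⟪B - M, P - M⟫ = -(lam * ⟪A - M, P - M⟫) := by
    rw [hblam, inner_neg_left, real_inner_smul_left]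
  have hbb : ⟪B - M, B - M⟫ = lam^2 * ⟪A - M, A - M⟫ := by
    rw [hblam, inner_neg_neg, real_inner_smul_left, real_inner_smul_right]; ring
  have hdu : ⟪D - M, O - M⟫ = -(mu * ⟪C - M, O - M⟫) := by
    rw [hdmu, inner_neg_left, real_inner_smul_left]
  have hdp : ⟪D - M, P - M⟫ = -(mu * ⟪C - M, P - M⟫) := by
    rw [hdmu, inner_neg_left, real_inner_smul_left]
  have hdd : ⟪D - M, D - M⟫ = mu^2 * ⟪C - M, C - M⟫ := by
    rw [hdmu, inner_neg_neg, real_inner_smul_left, real_inner_smul_right]; ring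
  rw [hbb, hbu] at circB
  rw [hdd, hdu] at circD
  -- power-of-point relations
  have hE5 : (r^2 - ⟪O - M, O - M⟫) * (lam - 1) + 2 * lam * ⟪A - M, O - M⟫ = 0 := by
    have hprod : (lam + 1) * ((r^2 - ⟪O - M, O - M⟫) * (lam - 1)
        + 2 * lam * ⟪A - M, O - M⟫) = 0 := by
      linear_combination circB - lam^2 * circA
    exact (mul_eq_zero.mp hprod).resolve_left (by positivity)
  have hE6 : (r^2 - ⟪O - M, O - M⟫) * (mu - 1) + 2 * mu * ⟪C - M, O - M⟫ = 0 := by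
    have hprod : (mu + 1) * ((r^2 - ⟪O - M, O - M⟫) * (mu - 1)
        + 2 * mu * ⟪C - M, O - M⟫) = 0 := by
      linear_combination circD - mu^2 * circC
    exact (mul_eq_zero.mp hprod).resolve_left (by positivity)
  -- sign analysis
  have hsign : (0 < ⟪A - M, O - M⟫ ∧ 0 < ⟪C - M, O - M⟫) ∨
      (⟪A - M, O - M⟫ < 0 ∧ ⟪C - M, O - M⟫ < 0) := mul_pos_iff.mp hACsame
  have hd1 : ⟪A - M, O - M⟫ + mu * ⟪C - M, O - M⟫ ≠ 0 := by
    rcases hsign with ⟨h1, h2⟩ | ⟨h1, h2⟩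
    · exact ne_of_gt (by have := mul_pos hmu0 h2; linarith)
    · exact ne_of_lt (by have := mul_neg_of_pos_of_neg hmu0 h2; linarith)
  have hd2 : lam * ⟪A - M, O - M⟫ + ⟪C - M, O - M⟫ ≠ 0 := by
    rcases hsign with ⟨h1, h2⟩ | ⟨h1, h2⟩
    · exact ne_of_gt (by have := mul_pos hlam0 h1; linarith)
    · exact ne_of_lt (by have := mul_neg_of_pos_of_neg hlam0 h1; linarith)
  -- X on both lines
  obtain ⟨s, hsX⟩ := spanPair A D X hXAD
  obtain ⟨sx, hsxX⟩ := spanPair P Q X hXPQ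
  have hxp : X - M = (1 - 2*sx) • (P - M) := by rw [hsxX, hq]; module
  have hxu : ⟪X - M, O - M⟫ = 0 := by rw [hxp, real_inner_smul_left, hpu, mul_zero]
  have hxpp : ⟪X - M, P - M⟫ = (1 - 2*sx) * (r^2 - ⟪O - M, O - M⟫) := by
    rw [hxp, real_inner_smul_left, hpp]
  have hE1 : (1 - s) * ⟪A - M, O - M⟫ + s * (-(mu * ⟪C - M, O - M⟫)) = 0 := by
    have h : ⟪X - M, O - M⟫ = ⟪(1 - s) • (A - M) + s • (D - M), O - M⟫ := by rw [← hsX]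
    rw [hxu, inner_add_left, real_inner_smul_left, real_inner_smul_left, hdu] at h
    linarith
  have hE2 : (1 - 2*sx) * (r^2 - ⟪O - M, O - M⟫)
      = (1 - s) * ⟪A - M, P - M⟫ + s * (-(mu * ⟪C - M, P - M⟫)) := by
    have h : ⟪X - M, P - M⟫ = ⟪(1 - s) • (A - M) + s • (D - M), P - M⟫ := by rw [← hsX]
    rw [hxpp, inner_add_left, real_inner_smul_left, real_inner_smul_left, hdp] at h
    linarith
  -- Y on both lines
  obtain ⟨w, hwY⟩ := spanPair B C Y hYBC
  obtain ⟨sy, hsyY⟩ := spanPair P Q Y hYPQ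
  have hyp : Y - M = (1 - 2*sy) • (P - M) := by rw [hsyY, hq]; module
  have hyu : ⟪Y - M, O - M⟫ = 0 := by rw [hyp, real_inner_smul_left, hpu, mul_zero]
  have hypp : ⟪Y - M, P - M⟫ = (1 - 2*sy) * (r^2 - ⟪O - M, O - M⟫) := by
    rw [hyp, real_inner_smul_left, hpp]
  have hE3 : (1 - w) * (-(lam * ⟪A - M, O - M⟫)) + w * ⟪C - M, O - M⟫ = 0 := by
    have h : ⟪Y - M, O - M⟫ = ⟪(1 - w) • (B - M) + w • (C - M), O - M⟫ := by rw [← hwY]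
    rw [hyu, inner_add_left, real_inner_smul_left, real_inner_smul_left, hbu] at h
    linarith
  have hE4 : (1 - 2*sy) * (r^2 - ⟪O - M, O - M⟫)
      = (1 - w) * (-(lam * ⟪A - M, P - M⟫)) + w * ⟪C - M, P - M⟫ := by
    have h : ⟪Y - M, P - M⟫ = ⟪(1 - w) • (B - M) + w • (C - M), P - M⟫ := by rw [← hwY]
    rw [hypp, inner_add_left, real_inner_smul_left, real_inner_smul_left, hbp] at h
    linarith
  -- final algebra
  set k : ℝ := r^2 - ⟪O - M, O - M⟫ with hk
  set al : ℝ := ⟪A - M, O - M⟫ with hal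
  set ga : ℝ := ⟪C - M, O - M⟫ with hga
  set ap : ℝ := ⟪A - M, P - M⟫ with hap
  set cp : ℝ := ⟪C - M, P - M⟫ with hcp
  have htau : (1 - 2*sx) * (k * (al + mu * ga)) = mu * (ga * ap - al * cp) := by
    linear_combination (al + mu * ga) * hE2 + (ap + mu * cp) * hE1
  have hrho : (1 - 2*sy) * (k * (lam * al + ga)) = -(lam * (ga * ap - al * cp)) := by
    linear_combination (lam * al + ga) * hE4 + (lam * ap + cp) * hE3
  have hbr : k * (mu * (lam * al + ga) - lam * (al + mu * ga)) = 0 := by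
    linear_combination lam * al * hE6 - mu * ga * hE5
  have hfinal : ((1 - 2*sx) + (1 - 2*sy)) * (k * k * (al + mu * ga) * (lam * al + ga)) = 0 := by
    linear_combination (k * (lam * al + ga)) * htau + (k * (al + mu * ga)) * hrho
      + (ga * ap - al * cp) * hbr
  have hKne : k * k * (al + mu * ga) * (lam * al + ga) ≠ 0 :=
    mul_ne_zero (mul_ne_zero (mul_ne_zero (ne_of_gt kpos) (ne_of_gt kpos)) hd1) hd2
  have hsum : (1 - 2*sx) + (1 - 2*sy) = 0 := (mul_eq_zero.mp hfinal).resolve_right hKne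
  -- conclude
  have hyx : Y - M = -(X - M) := by
    rw [hyp, hxp, show (1 - 2*sy) = -(1 - 2*sx) by linarith]
    module
  rw [dist_eq_norm, dist_eq_norm, hyx, norm_neg]
end

section
/- In the butterfly configuration, XM/YM = (AM/CM)·(AD/CB)·((BM² − CM²)/(DM² − AM²)), provided DM ≠ AM. Combined with AM·α = CM, DM·α = BM, AD·α = CB, this product equals 1. -/
open EuclideanGeometry

set_option maxHeartbeats 2000000

/-- In the butterfly configuration (with `DM ≠ AM`),
`XM/YM = (AM/CM)·(AD/CB)·((BM² − CM²)/(DM² − AM²))`, and this product equals `1`. -/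
theorem stmt10 (O P Q A B C D M X Y : EuclideanSpace ℝ (Fin 2)) (r : ℝ) (hr : 0 < r)
    (hP : dist O P = r) (hQ : dist O Q = r)
    (hA : dist O A = r) (hB : dist O B = r) (hC : dist O C = r) (hD : dist O D = r)
    (hM : M = midpoint ℝ P Q) (hPQ : P ≠ Q) (hMO : M ≠ O)
    (hAB : Sbtw ℝ A M B) (hCD : Sbtw ℝ C M D)
    (hACsame : 0 < (inner ℝ (A - M) (O - M) : ℝ) * (inner ℝ (C - M) (O - M) : ℝ))
    (hABopp : (inner ℝ (A - M) (O - M) : ℝ) * (inner ℝ (B - M) (O - M) : ℝ) < 0)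
    (hCDopp : (inner ℝ (C - M) (O - M) : ℝ) * (inner ℝ (D - M) (O - M) : ℝ) < 0)
    (hXAD : X ∈ affineSpan ℝ ({A, D} : Set (EuclideanSpace ℝ (Fin 2))))
    (hXPQ : X ∈ affineSpan ℝ ({P, Q} : Set (EuclideanSpace ℝ (Fin 2))))
    (hYBC : Y ∈ affineSpan ℝ ({B, C} : Set (EuclideanSpace ℝ (Fin 2))))
    (hYPQ : Y ∈ affineSpan ℝ ({P, Q} : Set (EuclideanSpace ℝ (Fin 2))))
    (hXA : X ≠ A) (hXM : X ≠ M) (hYC : Y ≠ C) (hYM : Y ≠ M)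
    (hDMAM : dist D M ≠ dist A M) :
    dist X M / dist Y M =
      (dist A M / dist C M) * (dist A D / dist C B) *
        ((dist B M ^ 2 - dist C M ^ 2) / (dist D M ^ 2 - dist A M ^ 2)) ∧
    dist X M / dist Y M = 1 := by
  obtain ⟨o, ho⟩ : ∃ o' : EuclideanSpace ℝ (Fin 2), O - M = o' := ⟨_, rfl⟩
  obtain ⟨pv, hpv⟩ : ∃ p' : EuclideanSpace ℝ (Fin 2), P - M = p' := ⟨_, rfl⟩
  obtain ⟨a, ha⟩ : ∃ a' : EuclideanSpace ℝ (Fin 2), A - M = a' := ⟨_, rfl⟩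
  obtain ⟨c, hc⟩ : ∃ c' : EuclideanSpace ℝ (Fin 2), C - M = c' := ⟨_, rfl⟩
  rw [ha, hc, ho] at hACsame
  -- Q - M = -pv
  have hQM : Q - M = -pv := by
    rw [← hpv, hM, midpoint_eq_smul_add]
    have h2 : (⅟2 : ℝ) = 1/2 := by norm_num
    rw [h2]; module
  -- circle equations
  have circ : ∀ Z : EuclideanSpace ℝ (Fin 2), dist O Z = r →
      ‖Z - M‖^2 - 2 * (inner ℝ (Z - M) o : ℝ) + ‖o‖^2 = r^2 := by
    intro Z hZ
    have h1 : (Z - M) - o = -(O - Z) := by rw [← ho]; abel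
    have h2 : ‖(Z - M) - o‖^2 = r^2 := by
      rw [h1, norm_neg, ← dist_eq_norm, hZ]
    rw [@norm_sub_sq_real] at h2
    linarith
  have cP := circ P hP
  have cQ := circ Q hQ
  have cA := circ A hA
  have cB := circ B hB
  have cC := circ C hC
  have cD := circ D hD
  rw [hQM] at cQ
  rw [hpv] at cP
  rw [ha] at cA
  rw [hc] at cC
  rw [norm_neg, inner_neg_left] at cQ
  -- perpendicularity and e
  have hpo : (inner ℝ pv o : ℝ) = 0 := by linarith
  obtain ⟨e, he⟩ : ∃ e : ℝ, ‖pv‖^2 = e := ⟨_, rfl⟩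
  rw [he] at cP cQ
  have hE : e + ‖o‖^2 = r^2 := by linarith
  have hpv0 : pv ≠ 0 := by
    intro h
    apply hPQ
    have hP' : P = M := by
      rw [← hpv] at h; exact sub_eq_zero.mp h
    have hQ' : Q = M := by
      have : Q - M = 0 := by rw [hQM, h, neg_zero]
      exact sub_eq_zero.mp this
    rw [hP', hQ']
  have he0 : 0 < e := by
    rw [← he]
    have : 0 < ‖pv‖ := norm_pos_iff.mpr hpv0
    positivity
  -- get s, u
  have hsex : ∃ s : ℝ, 0 < s ∧ B - M = s • (M - A) := by
    have hrw := hAB.wbtw.sameRay_vsub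
    have h1 : M -ᵥ A ≠ 0 := by simpa [vsub_eq_sub, sub_ne_zero] using hAB.ne_left
    have h2 : B -ᵥ M ≠ 0 := by simpa [vsub_eq_sub, sub_ne_zero] using hAB.ne_right.symm
    obtain ⟨s, hs, hss⟩ := hrw.exists_pos_left h1 h2
    exact ⟨s, hs, by simpa [vsub_eq_sub] using hss.symm⟩
  obtain ⟨s, hs0, hBv⟩ := hsex
  have huex : ∃ u : ℝ, 0 < u ∧ D - M = u • (M - C) := by
    have hrw := hCD.wbtw.sameRay_vsub
    have h1 : M -ᵥ C ≠ 0 := by simpa [vsub_eq_sub, sub_ne_zero] using hCD.ne_left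
    have h2 : D -ᵥ M ≠ 0 := by simpa [vsub_eq_sub, sub_ne_zero] using hCD.ne_right.symm
    obtain ⟨u, hu, huu⟩ := hrw.exists_pos_left h1 h2
    exact ⟨u, hu, by simpa [vsub_eq_sub] using huu.symm⟩
  obtain ⟨u, hu0, hDv⟩ := huex
  have hMA : M - A = -a := by rw [← ha]; abel
  have hMC : M - C = -c := by rw [← hc]; abel
  rw [hMA] at hBv
  rw [hMC] at hDv
  have hBv' : B - M = -(s • a) := by rw [hBv, smul_neg]
  have hDv' : D - M = -(u • c) := by rw [hDv, smul_neg]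
  -- rewrite circle eqs for B, D
  rw [hBv', norm_neg, inner_neg_left, norm_smul, real_inner_smul_left,
    Real.norm_eq_abs, abs_of_pos hs0] at cB
  rw [hDv', norm_neg, inner_neg_left, norm_smul, real_inner_smul_left,
    Real.norm_eq_abs, abs_of_pos hu0] at cD
  -- power of point
  have hsa : s * ‖a‖^2 = e := by
    have h0 : (s + 1) * (s * ‖a‖^2 - e) = 0 := by linear_combination cB + s * cA - (1+s) * hE
    have h1 : s + 1 ≠ 0 := by positivity
    have := mul_eq_zero.mp h0
    rcases this with h | h
    · exact absurd h h1
    · linarith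
  have huc : u * ‖c‖^2 = e := by
    have h0 : (u + 1) * (u * ‖c‖^2 - e) = 0 := by linear_combination cD + u * cC - (1+u) * hE
    have h1 : u + 1 ≠ 0 := by positivity
    have := mul_eq_zero.mp h0
    rcases this with h | h
    · exact absurd h h1
    · linarith
  have hna : ‖a‖ ≠ 0 := by
    intro h; rw [h] at hsa; simp at hsa; linarith
  have hnc : ‖c‖ ≠ 0 := by
    intro h; rw [h] at huc; simp at huc; linarith
  have hna2 : (‖a‖:ℝ)^2 ≠ 0 := pow_ne_zero 2 hna
  have hnc2 : (‖c‖:ℝ)^2 ≠ 0 := pow_ne_zero 2 hnc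
  have hs' : s = e / ‖a‖^2 := by field_simp; linarith
  have hu' : u = e / ‖c‖^2 := by field_simp; linarith
  have hAo : (inner ℝ a o : ℝ) = (‖a‖^2 - e)/2 := by linarith
  have hCo : (inner ℝ c o : ℝ) = (‖c‖^2 - e)/2 := by linarith
  -- denominators nonzero
  have hden1 : (inner ℝ a o : ℝ) + u * (inner ℝ c o : ℝ) ≠ 0 := by
    intro h
    have hq : (inner ℝ a o : ℝ) = -(u * (inner ℝ c o : ℝ)) := by linarith
    rw [hq] at hACsame
    linarith [mul_nonneg hu0.le (mul_self_nonneg (inner ℝ c o : ℝ))]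
  have hden2 : (inner ℝ c o : ℝ) + s * (inner ℝ a o : ℝ) ≠ 0 := by
    intro h
    have hq : (inner ℝ c o : ℝ) = -(s * (inner ℝ a o : ℝ)) := by linarith
    rw [hq] at hACsame
    linarith [mul_nonneg hs0.le (mul_self_nonneg (inner ℝ a o : ℝ))]
  -- master identity
  have hmaster : u * ((inner ℝ c o : ℝ) + s * (inner ℝ a o : ℝ))
      = s * ((inner ℝ a o : ℝ) + u * (inner ℝ c o : ℝ)) := by
    rw [hAo, hCo, hs', hu']; field_simp; ring
  -- X decomposition
  obtain ⟨k, hk⟩ : ∃ k : ℝ, X - A = k • (D - A) := by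
    rw [show X = (X - A) +ᵥ A by simp] at hXAD
    have := (vadd_left_mem_affineSpan_pair).mp hXAD
    simpa [vsub_eq_sub, eq_comm] using this
  have hDA : D - A = -(u • c) - a := by
    have h1 : D - A = (D - M) - (A - M) := by abel
    rw [h1, hDv', ha]
  have hXv : X - M = (1 - k) • a - (k * u) • c := by
    have h1 : X - M = (X - A) + (A - M) := by abel
    rw [h1, hk, hDA, ha]
    module
  obtain ⟨t, ht⟩ : ∃ t : ℝ, X - P = t • (Q - P) := by
    rw [show X = (X - P) +ᵥ P by simp] at hXPQ
    have := (vadd_left_mem_affineSpan_pair).mp hXPQ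
    simpa [vsub_eq_sub, eq_comm] using this
  have hQP : Q - P = -(2:ℝ) • pv := by
    have h1 : Q - P = (Q - M) - (P - M) := by abel
    rw [h1, hQM, hpv]; module
  have hXpv : X - M = (1 - 2*t) • pv := by
    have h1 : X - M = (X - P) + (P - M) := by abel
    rw [h1, ht, hQP, hpv]; module
  have hXo : (inner ℝ (X - M) o : ℝ) = 0 := by
    rw [hXpv, real_inner_smul_left, hpo, mul_zero]
  have hkeq : k * ((inner ℝ a o : ℝ) + u * (inner ℝ c o : ℝ)) = (inner ℝ a o : ℝ) := by
    rw [hXv] at hXo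
    rw [inner_sub_left, real_inner_smul_left, real_inner_smul_left] at hXo
    linarith
  -- Y decomposition
  obtain ⟨l, hl⟩ : ∃ l : ℝ, Y - B = l • (C - B) := by
    rw [show Y = (Y - B) +ᵥ B by simp] at hYBC
    have := (vadd_left_mem_affineSpan_pair).mp hYBC
    simpa [vsub_eq_sub, eq_comm] using this
  have hCB : C - B = c + s • a := by
    have h1 : C - B = (C - M) - (B - M) := by abel
    rw [h1, hBv', hc]; module
  have hYv : Y - M = l • c - ((1 - l) * s) • a := by
    have h1 : Y - M = (Y - B) + (B - M) := by abel
    rw [h1, hl, hCB, hBv']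
    module
  obtain ⟨t', ht'⟩ : ∃ t' : ℝ, Y - P = t' • (Q - P) := by
    rw [show Y = (Y - P) +ᵥ P by simp] at hYPQ
    have := (vadd_left_mem_affineSpan_pair).mp hYPQ
    simpa [vsub_eq_sub, eq_comm] using this
  have hYpv : Y - M = (1 - 2*t') • pv := by
    have h1 : Y - M = (Y - P) + (P - M) := by abel
    rw [h1, ht', hQP, hpv]; module
  have hYo : (inner ℝ (Y - M) o : ℝ) = 0 := by
    rw [hYpv, real_inner_smul_left, hpo, mul_zero]
  have hleq : l * ((inner ℝ c o : ℝ) + s * (inner ℝ a o : ℝ)) = s * (inner ℝ a o : ℝ) := by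
    rw [hYv] at hYo
    rw [inner_sub_left, real_inner_smul_left, real_inner_smul_left] at hYo
    linarith
  -- coefficient identities
  set Ao : ℝ := (inner ℝ a o : ℝ) with hAodef
  set Co : ℝ := (inner ℝ c o : ℝ) with hCodef
  have hprod : (Ao + u * Co) * (Co + s * Ao) ≠ 0 := mul_ne_zero hden1 hden2
  have hc2 : k * u = l := by
    have h0 : (k * u) * ((Ao + u * Co) * (Co + s * Ao))
        = l * ((Ao + u * Co) * (Co + s * Ao)) := by
      linear_combination (u * (Co + s * Ao)) * hkeq - (Ao + u * Co) * hleq + Ao * hmaster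
    exact mul_right_cancel₀ hprod h0
  have hc1 : 1 - k = (1 - l) * s := by
    have h0 : (1 - k) * ((Ao + u * Co) * (Co + s * Ao))
        = ((1 - l) * s) * ((Ao + u * Co) * (Co + s * Ao)) := by
      linear_combination (-(Co + s * Ao)) * hkeq + (s * (Ao + u * Co)) * hleq + Co * hmaster
    exact mul_right_cancel₀ hprod h0
  have hxy : X - M = -(Y - M) := by
    rw [hXv, hYv, hc1, hc2]
    module
  -- distances
  have dXM : dist X M = ‖X - M‖ := dist_eq_norm X M
  have dYM : dist Y M = ‖Y - M‖ := dist_eq_norm Y M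
  have hXMYM : dist X M = dist Y M := by
    rw [dXM, dYM, hxy, norm_neg]
  have hYM0 : dist Y M ≠ 0 := dist_ne_zero.mpr hYM
  have ratio1 : dist X M / dist Y M = 1 := by
    rw [hXMYM]; exact div_self hYM0
  -- distance values
  have dAM : dist A M = ‖a‖ := by rw [dist_eq_norm, ha]
  have dCM : dist C M = ‖c‖ := by rw [dist_eq_norm, hc]
  have dBM : dist B M = s * ‖a‖ := by
    rw [dist_eq_norm, hBv', norm_neg, norm_smul, Real.norm_eq_abs, abs_of_pos hs0]
  have dDM : dist D M = u * ‖c‖ := by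
    rw [dist_eq_norm, hDv', norm_neg, norm_smul, Real.norm_eq_abs, abs_of_pos hu0]
  have hADv : A - D = a + u • c := by
    have h1 : A - D = (A - M) - (D - M) := by abel
    rw [h1, hDv', ha]
    module
  have dAD : dist A D = ‖a + u • c‖ := by rw [dist_eq_norm, hADv]
  have dCB : dist C B = ‖c + s • a‖ := by rw [dist_eq_norm, hCB]
  -- chord relation
  have e1 : ‖a + u • c‖^2 = ‖a‖^2 + 2*(u * (inner ℝ a c : ℝ)) + u^2 * ‖c‖^2 := by
    rw [norm_add_sq_real, real_inner_smul_right, norm_smul, Real.norm_eq_abs,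
      abs_of_pos hu0]
    ring
  have e2 : ‖c + s • a‖^2 = ‖c‖^2 + 2*(s * (inner ℝ c a : ℝ)) + s^2 * ‖a‖^2 := by
    rw [norm_add_sq_real, real_inner_smul_right, norm_smul, Real.norm_eq_abs,
      abs_of_pos hs0]
    ring
  have hinner_symm : (inner ℝ a c : ℝ) = (inner ℝ c a : ℝ) := real_inner_comm c a
  have hADCB : ‖a + u • c‖ * ‖c‖ = ‖c + s • a‖ * ‖a‖ := by
    have hsq : (‖a + u • c‖ * ‖c‖)^2 = (‖c + s • a‖ * ‖a‖)^2 := by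
      rw [mul_pow, mul_pow, e1, e2, ← hinner_symm]
      linear_combination (2*(inner ℝ a c : ℝ) + u*‖c‖^2 + s*‖a‖^2) * huc
        - (2*(inner ℝ a c : ℝ) + u*‖c‖^2 + s*‖a‖^2) * hsa
    have h1 : (0:ℝ) ≤ ‖a + u • c‖ * ‖c‖ := by positivity
    have h2 : (0:ℝ) ≤ ‖c + s • a‖ * ‖a‖ := by positivity
    have h3 : (‖a + u • c‖ * ‖c‖ - ‖c + s • a‖ * ‖a‖) * (‖a + u • c‖ * ‖c‖ + ‖c + s • a‖ * ‖a‖) = 0 := by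
      linear_combination hsq
    rcases mul_eq_zero.mp h3 with h4 | h4
    · linarith
    · have h5 : ‖a + u • c‖ * ‖c‖ = 0 := by linarith
      have h6 : ‖c + s • a‖ * ‖a‖ = 0 := by linarith
      rw [h5, h6]
  -- nonzero chords
  have hCB0 : ‖c + s • a‖ ≠ 0 := by
    intro h
    have hv : c + s • a = 0 := norm_eq_zero.mp h
    apply hden2
    have : (inner ℝ (c + s • a) o : ℝ) = Co + s * Ao := by
      rw [inner_add_left, real_inner_smul_left]
    rw [hv, inner_zero_left] at this
    linarith
  have hAD0 : ‖a + u • c‖ ≠ 0 := by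
    intro h
    have hv : a + u • c = 0 := norm_eq_zero.mp h
    apply hden1
    have : (inner ℝ (a + u • c) o : ℝ) = Ao + u * Co := by
      rw [inner_add_left, real_inner_smul_left]
    rw [hv, inner_zero_left] at this
    linarith
  -- hDMAM in scalars
  rw [dDM, dAM] at hDMAM
  have hne : e ≠ ‖a‖ * ‖c‖ := by
    intro h
    apply hDMAM
    rw [hu']
    field_simp
    linear_combination h
  have hne2 : e^2 - ‖a‖^2 * ‖c‖^2 ≠ 0 := by
    intro h
    have hpos : 0 < ‖a‖ := lt_of_le_of_ne (norm_nonneg a) (Ne.symm hna)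
    have hposc : 0 < ‖c‖ := lt_of_le_of_ne (norm_nonneg c) (Ne.symm hnc)
    have h3 : (e - ‖a‖ * ‖c‖) * (e + ‖a‖ * ‖c‖) = 0 := by linear_combination h
    have h4 : 0 < e + ‖a‖ * ‖c‖ := by positivity
    rcases mul_eq_zero.mp h3 with h5 | h5
    · exact hne (by linarith)
    · linarith
  -- final RHS computation
  have hRHS : (dist A M / dist C M) * (dist A D / dist C B) *
      ((dist B M ^ 2 - dist C M ^ 2) / (dist D M ^ 2 - dist A M ^ 2)) = 1 := by
    rw [dAM, dCM, dAD, dCB, dBM, dDM]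
    have hADval : ‖a + u • c‖ = ‖c + s • a‖ * ‖a‖ / ‖c‖ := by
      rw [eq_div_iff hnc]; exact hADCB
    have hn : (s * ‖a‖)^2 - ‖c‖^2 = (e^2 - ‖a‖^2 * ‖c‖^2)/‖a‖^2 := by
      rw [hs']; field_simp
    have hd : (u * ‖c‖)^2 - ‖a‖^2 = (e^2 - ‖a‖^2 * ‖c‖^2)/‖c‖^2 := by
      rw [hu']; field_simp
    rw [hADval, hn, hd]
    field_simp
  exact ⟨by rw [ratio1]; exact hRHS.symm, ratio1⟩
end
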